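/- Rational Fay identity: Let P₀,…,P_{g-1}, P₀',…,P_{g-1}' be fixed complex parameters with the Pⱼ pairwise distinct, and for a vector f = (f₀,…,f_{g-1}) define H(f) = det(Pⱼ^i − fⱼ·(Pⱼ')^i)_{i,j=0}^{g-1} / ∏_{i>j}(Pᵢ−Pⱼ), and σⱼ(A,B) = ((Pⱼ'−A)(Pⱼ−B))/((Pⱼ'−B)(Pⱼ−A)). Then for pairwise distinct A, B, C, D (distinct from all Pⱼ, Pⱼ'): H(f)·H(f·σ(A,B)·σ(C,D)) = [A,B;D,C]·H(f·σ(A,B))·H(f·σ(C,D)) + [A,D;B,C]·H(f·σ(A,D))·H(f·σ(C,B)), where f·σ(A,B) denotes the componentwise product (fⱼ·σⱼ(A,B))ⱼ and [A,B;C,D] = (A−C)(B−D)/((A−D)(B−C)). -/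

import Mathlib

open Finset

/-- The cross-ratio `[A,B;C,D] = (A-C)(B-D)/((A-D)(B-C))`. -/
noncomputable def crossRatio (A B C D : ℂ) : ℂ :=
  (A - C) * (B - D) / ((A - D) * (B - C))

/-- `σⱼ(A,B) = (Pⱼ'-A)(Pⱼ-B)/((Pⱼ'-B)(Pⱼ-A))`. -/
noncomputable def sigmaFn (P P' A B : ℂ) : ℂ :=
  (P' - A) * (P - B) / ((P' - B) * (P - A))

/-- The rational Θ-function
`H(f) = det(Pⱼ^i − fⱼ (Pⱼ')^i) / ∏_{i>j} (Pᵢ − Pⱼ)`. -/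
noncomputable def Hfun (g : ℕ) (P P' : Fin g → ℂ) (f : Fin g → ℂ) : ℂ :=
  Matrix.det (Matrix.of fun i j : Fin g => P j ^ (i : ℕ) - f j * P' j ^ (i : ℕ)) /
    ∏ p ∈ Finset.univ.filter (fun p : Fin g × Fin g => p.2 < p.1), (P p.1 - P p.2)

namespace FayAux
open Matrix

variable {n : ℕ}

/-- Bracket: determinant of the `(n+2)×(n+2)` matrix with rows `x, y, M 0, …, M (n-1)`. -/
noncomputable def br (M : Fin n → Fin (n + 2) → ℂ) (x y : Fin (n + 2) → ℂ) : ℂ :=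
  Matrix.detRowAlternating (Fin.cons x (Fin.cons y M) : Fin (n + 2) → Fin (n + 2) → ℂ)

variable (M : Fin n → Fin (n + 2) → ℂ)

lemma consL (z y : Fin (n + 2) → ℂ) (x : Fin (n + 2) → ℂ) :
    (Fin.cons z (Fin.cons y M) : Fin (n + 2) → Fin (n + 2) → ℂ)
      = Function.update (Fin.cons x (Fin.cons y M) : Fin (n + 2) → Fin (n + 2) → ℂ) 0 z := by
  rw [Fin.update_cons_zero]

lemma consR (x z : Fin (n + 2) → ℂ) (y : Fin (n + 2) → ℂ) :
    (Fin.cons x (Fin.cons z M) : Fin (n + 2) → Fin (n + 2) → ℂ)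
      = Function.update (Fin.cons x (Fin.cons y M) : Fin (n + 2) → Fin (n + 2) → ℂ)
          (0 : Fin (n+1)).succ z := by
  rw [← Fin.cons_update, Fin.update_cons_zero]

lemma br_add_left (x x' y : Fin (n + 2) → ℂ) :
    br M (x + x') y = br M x y + br M x' y := by
  unfold br
  rw [consL M (x + x') y x, Matrix.detRowAlternating.map_update_add,
    ← consL M x y x, ← consL M x' y x]

lemma br_smul_left (c : ℂ) (x y : Fin (n + 2) → ℂ) :
    br M (c • x) y = c * br M x y := by
  unfold br
  rw [consL M (c • x) y x, Matrix.detRowAlternating.map_update_smul,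
    ← consL M x y x]
  rfl

lemma br_add_right (x y y' : Fin (n + 2) → ℂ) :
    br M x (y + y') = br M x y + br M x y' := by
  unfold br
  rw [consR M x (y + y') y, Matrix.detRowAlternating.map_update_add,
    ← consR M x y y, ← consR M x y' y]

lemma br_smul_right (c : ℂ) (x y : Fin (n + 2) → ℂ) :
    br M x (c • y) = c * br M x y := by
  unfold br
  rw [consR M x (c • y) y, Matrix.detRowAlternating.map_update_smul,
    ← consR M x y y]
  rfl

lemma br_self (x : Fin (n + 2) → ℂ) : br M x x = 0 := by
  refine Matrix.detRowAlternating.map_eq_zero_of_eq _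
    (i := (0 : Fin (n + 2))) (j := (1 : Fin (n + 2))) ?_ ?_
  · show (Fin.cons x (Fin.cons x M) : Fin (n + 2) → Fin (n + 2) → ℂ) 0
      = (Fin.cons x (Fin.cons x M) : Fin (n + 2) → Fin (n + 2) → ℂ) 1
    rw [← Fin.succ_zero_eq_one, Fin.cons_zero, Fin.cons_succ, Fin.cons_zero]
  · exact Fin.zero_ne_one

lemma br_swap (x y : Fin (n + 2) → ℂ) : br M x y = - br M y x := by
  have h0 : br M (x + y) (x + y) = 0 := br_self M (x + y)
  rw [br_add_left, br_add_right, br_add_right, br_self, br_self] at h0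
  linear_combination h0

lemma br_zero_left (y : Fin (n + 2) → ℂ) : br M 0 y = 0 := by
  have := br_smul_left M 0 0 y
  simpa using this

lemma br_row_left (k : Fin n) (y : Fin (n + 2) → ℂ) : br M (M k) y = 0 := by
  refine Matrix.detRowAlternating.map_eq_zero_of_eq _
    (i := (0 : Fin (n + 2))) (j := (k.succ.succ : Fin (n + 2))) ?_ ?_
  · show (Fin.cons (M k) (Fin.cons y M) : Fin (n + 2) → Fin (n + 2) → ℂ) 0
      = (Fin.cons (M k) (Fin.cons y M) : Fin (n + 2) → Fin (n + 2) → ℂ) k.succ.succ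
    rw [Fin.cons_zero, Fin.cons_succ, Fin.cons_succ]
  · exact (Fin.succ_ne_zero _).symm

lemma br_row_right (k : Fin n) (x : Fin (n + 2) → ℂ) : br M x (M k) = 0 := by
  rw [br_swap, br_row_left, neg_zero]

lemma br_span_left (x y : Fin (n + 2) → ℂ)
    (hx : x ∈ Submodule.span ℂ (Set.range M)) : br M x y = 0 := by
  induction hx using Submodule.span_induction with
  | mem z hz => obtain ⟨k, rfl⟩ := hz; exact br_row_left M k y
  | zero => exact br_zero_left M y
  | add a b _ _ ha hb => rw [br_add_left, ha, hb, add_zero]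
  | smul c a _ ha => rw [br_smul_left, ha, mul_zero]

lemma br_span_right (x y : Fin (n + 2) → ℂ)
    (hy : y ∈ Submodule.span ℂ (Set.range M)) : br M x y = 0 := by
  rw [br_swap, br_span_left M y x hy, neg_zero]



/-- The Plücker expression as a function of four vectors. -/
noncomputable def pl (v : Fin 4 → Fin (n + 2) → ℂ) : ℂ :=
  br M (v 0) (v 1) * br M (v 2) (v 3) - br M (v 0) (v 2) * br M (v 1) (v 3)
    + br M (v 0) (v 3) * br M (v 1) (v 2)

/-- The Plücker expression is an alternating map. -/
noncomputable def plMap : (Fin (n + 2) → ℂ) [⋀^Fin 4]→ₗ[ℂ] ℂ where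
  toFun := pl M
  map_update_add' := by
    intro _ v i x y
    fin_cases i <;>
      simp only [pl, Function.update_apply, Fin.ext_iff, Fin.isValue, show ((0:Fin 4):ℕ)=0 from rfl, show ((1:Fin 4):ℕ)=1 from rfl,
        show ((2:Fin 4):ℕ)=2 from rfl, show ((3:Fin 4):ℕ)=3 from rfl] <;> norm_num <;>
      simp only [br_add_left, br_add_right] <;> ring
  map_update_smul' := by
    intro _ v i c x
    fin_cases i <;>
      simp only [pl, Function.update_apply, Fin.ext_iff, Fin.isValue, show ((0:Fin 4):ℕ)=0 from rfl, show ((1:Fin 4):ℕ)=1 from rfl,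
        show ((2:Fin 4):ℕ)=2 from rfl, show ((3:Fin 4):ℕ)=3 from rfl] <;> norm_num <;>
      simp only [br_smul_left, br_smul_right, smul_eq_mul] <;> ring
  map_eq_zero_of_eq' := by
    intro v i j h hij
    fin_cases i <;> fin_cases j <;>
      simp only [show ((⟨0, by norm_num⟩:Fin 4)) = 0 from rfl, show ((⟨1, by norm_num⟩:Fin 4)) = 1 from rfl,
        show ((⟨2, by norm_num⟩:Fin 4)) = 2 from rfl, show ((⟨3, by norm_num⟩:Fin 4)) = 3 from rfl,
        Fin.isValue] at h hij ⊢ <;>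
      first
      | exact absurd rfl hij
      | (simp only [pl]; rw [h];
         simp only [br_swap M (v 1) (v 0), br_swap M (v 2) (v 0), br_swap M (v 3) (v 0),
           br_swap M (v 2) (v 1), br_swap M (v 3) (v 1), br_swap M (v 3) (v 2),
           br_self M (v 0), br_self M (v 1), br_self M (v 2), br_self M (v 3)];
         ring)

lemma plMap_apply (a b c d : Fin (n + 2) → ℂ) :
    plMap M ![a, b, c, d]
      = br M a b * br M c d - br M a c * br M b d + br M a d * br M b c := rfl

lemma br_eq_zero_of_dep (hM : ¬ LinearIndependent ℂ M) (x y : Fin (n + 2) → ℂ) :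
    br M x y = 0 := by
  obtain ⟨t, ht, i0, hi0⟩ := Fintype.not_linearIndependent_iff.mp hM
  have : br M x y = Matrix.det
      (Matrix.of (Fin.cons x (Fin.cons y M) : Fin (n + 2) → Fin (n + 2) → ℂ)) := rfl
  rw [this, ← Matrix.exists_vecMul_eq_zero_iff]
  refine ⟨(Fin.cons 0 (Fin.cons 0 t) : Fin (n + 2) → ℂ), ?_, ?_⟩
  · intro h0
    apply hi0
    have := congrFun h0 i0.succ.succ
    simpa using this
  · funext j
    have hsum := congrFun ht j
    simp only [Matrix.vecMul, dotProduct]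
    rw [Fin.sum_univ_succ, Fin.sum_univ_succ]
    simp only [Fin.cons_zero, Fin.cons_succ, zero_mul, zero_add]
    simpa using hsum

theorem plucker (a b c d : Fin (n + 2) → ℂ) :
    br M a b * br M c d - br M a c * br M b d + br M a d * br M b c = 0 := by
  by_cases hM : LinearIndependent ℂ M
  · set W := Submodule.span ℂ (Set.range M) with hWdef
    obtain ⟨W', hW'⟩ := Submodule.exists_isCompl W
    have hsup : W ⊔ W' = ⊤ := hW'.sup_eq_top
    have decomp : ∀ v : Fin (n + 2) → ℂ, ∃ w v', w ∈ W ∧ v' ∈ W' ∧ v = w + v' := by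
      intro v
      have : v ∈ W ⊔ W' := by rw [hsup]; trivial
      obtain ⟨w, hw, v', hv', hsum⟩ := Submodule.mem_sup.mp this
      exact ⟨w, v', hw, hv', hsum.symm⟩
    obtain ⟨wa, a', hwa, ha', rfl⟩ := decomp a
    obtain ⟨wb, b', hwb, hb', rfl⟩ := decomp b
    obtain ⟨wc, c', hwc, hc', rfl⟩ := decomp c
    obtain ⟨wd, d', hwd, hd', rfl⟩ := decomp d
    have hbrW : ∀ x y : Fin (n + 2) → ℂ, ∀ w ∈ W, ∀ w' ∈ W,
        br M (w + x) (w' + y) = br M x y := by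
      intro x y w hw w' hw'
      rw [br_add_left, br_add_right, br_add_right, br_span_left M w y hw,
        br_span_left M w w' hw, br_span_right M x w' hw']
      ring
    rw [hbrW a' b' wa hwa wb hwb, hbrW c' d' wc hwc wd hwd, hbrW a' c' wa hwa wc hwc,
      hbrW b' d' wb hwb wd hwd, hbrW a' d' wa hwa wd hwd, hbrW b' c' wb hwb wc hwc]
    rw [← plMap_apply]
    apply AlternatingMap.map_linearDependent
    intro hind
    have hW'rank : Module.finrank ℂ W' = 2 := by
      have h1 := Submodule.finrank_add_eq_of_isCompl hW'
      have h2 : Module.finrank ℂ W = n := by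
        rw [hWdef, finrank_span_eq_card hM, Fintype.card_fin]
      have h3 : Module.finrank ℂ (Fin (n + 2) → ℂ) = n + 2 := by
        simp [Module.finrank_pi]
      omega
    have hmem : ∀ i : Fin 4, (![a', b', c', d'] : Fin 4 → Fin (n+2) → ℂ) i ∈ W' := by
      intro i; fin_cases i <;> simpa
    let vv : Fin 4 → W' := fun i => ⟨![a', b', c', d'] i, hmem i⟩
    have hvv : LinearIndependent ℂ vv := by
      apply LinearIndependent.of_comp W'.subtype
      exact hind
    have hcard := hvv.fintype_card_le_finrank
    rw [Fintype.card_fin, hW'rank] at hcard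
    omega
  · simp [br_eq_zero_of_dep M hM]


/-- power vector -/
def pw (m : ℕ) (x : ℂ) : Fin m → ℂ := fun i => x ^ (i : ℕ)

/-- Vandermonde product -/
def VV {m : ℕ} (v : Fin m → ℂ) : ℂ := ∏ i, ∏ j ∈ Ioi i, (v j - v i)

lemma piecewise_self {α : Type*} {β : α → Type*} [DecidableEq α] (s : Finset α)
    (m : ∀ a, β a) : s.piecewise m m = m := by
  funext j; by_cases h : j ∈ s <;> simp [Finset.piecewise, h]

lemma det_expand (m : ℕ) (u w : Fin m → Fin m → ℂ) (t : Fin m → ℂ) :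
    Matrix.detRowAlternating (fun j => u j + t j • w j)
      = ∑ S : Finset (Fin m), (∏ j ∈ S, t j) *
          Matrix.detRowAlternating (S.piecewise w u) := by
  have h1 : (fun j => u j + t j • w j) = (fun j => t j • w j) + u := by
    funext j; simp [add_comm]
  rw [h1]
  refine Eq.trans (Matrix.detRowAlternating.toMultilinearMap.map_add_univ
    (fun j => t j • w j) u) ?_
  refine Finset.sum_congr rfl fun S _ => ?_
  have h2 : S.piecewise (fun j => t j • w j) u
      = S.piecewise (fun i => (S.piecewise t (fun _ => (1:ℂ))) i • (S.piecewise w u) i)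
          (S.piecewise w u) := by
    funext j
    by_cases h : j ∈ S <;> simp [Finset.piecewise, h]
  rw [h2]
  refine Eq.trans (Matrix.detRowAlternating.toMultilinearMap.map_piecewise_smul
    (S.piecewise t (fun _ => (1:ℂ))) (S.piecewise w u) S) ?_
  rw [smul_eq_mul]
  congr 1
  exact Finset.prod_congr rfl fun j hj => S.piecewise_eq_of_mem _ _ hj

lemma prod_pairs (m : ℕ) (v : Fin m → ℂ) :
    ∏ p ∈ Finset.univ.filter (fun p : Fin m × Fin m => p.2 < p.1), (v p.1 - v p.2)
      = VV v := by
  rw [Finset.prod_filter, ← Finset.univ_product_univ, Finset.prod_product]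
  have h1 : ∀ i : Fin m, (∏ j : Fin m, if j < i then v i - v j else 1)
      = ∏ j ∈ Finset.Iio i, (v i - v j) := by
    intro i
    rw [← Finset.prod_filter]
    congr 1
    ext j; simp
  simp_rw [h1]
  rw [Finset.prod_comm' (t' := Finset.univ) (s' := fun j => Finset.Ioi j) (by
    intro x y; simp [Finset.mem_Iio, Finset.mem_Ioi])]
  rfl

lemma vprod_cons (m : ℕ) (X : ℂ) (v : Fin m → ℂ) :
    VV (Fin.cons X v : Fin (m+1) → ℂ)
      = (∏ j, (v j - X)) * VV v := by
  unfold VV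
  rw [Fin.prod_univ_succ]
  congr 1
  · rw [Fin.prod_Ioi_zero]
    simp
  · refine Finset.prod_congr rfl fun i _ => ?_
    rw [Fin.prod_Ioi_succ]
    simp


lemma detH_expand (m : ℕ) (P P' φ : Fin m → ℂ) :
    Matrix.det (Matrix.of fun i j : Fin m => P j ^ (i : ℕ) - φ j * P' j ^ (i : ℕ))
      = ∑ S : Finset (Fin m), (∏ j ∈ S, (-φ j)) * VV (S.piecewise P' P) := by
  rw [← Matrix.det_transpose]
  have h1 : (Matrix.of fun i j : Fin m => P j ^ (i : ℕ) - φ j * P' j ^ (i : ℕ))ᵀ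
      = Matrix.of (fun j => pw m (P j) + (-φ j) • pw m (P' j)) := by
    ext j i
    simp [pw, Matrix.transpose_apply]
    ring
  rw [h1]
  have h2 : Matrix.det (Matrix.of (fun j => pw m (P j) + (-φ j) • pw m (P' j)))
      = Matrix.detRowAlternating (fun j => pw m (P j) + (-φ j) • pw m (P' j)) := rfl
  rw [h2, det_expand m (fun j => pw m (P j)) (fun j => pw m (P' j)) (fun j => -φ j)]
  refine Finset.sum_congr rfl fun S _ => ?_
  congr 1
  have h3 : (S.piecewise (fun j => pw m (P' j)) (fun j => pw m (P j)))
      = fun j => pw m (S.piecewise P' P j) := by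
    funext j
    by_cases h : j ∈ S <;> simp [Finset.piecewise, h]
  rw [h3]
  have h4 : Matrix.detRowAlternating (fun j => pw m (S.piecewise P' P j))
      = Matrix.det (Matrix.vandermonde (S.piecewise P' P)) := rfl
  rw [h4, Matrix.det_vandermonde]
  rfl

/-- Hfun in expanded form. -/
lemma Hfun_eq (m : ℕ) (P P' φ : Fin m → ℂ) :
    Hfun m P P' φ
      = (∑ S : Finset (Fin m), (∏ j ∈ S, (-φ j)) * VV (S.piecewise P' P)) / VV P := by
  unfold Hfun
  rw [detH_expand, prod_pairs]

lemma br_expand (P P' f s s' : Fin n → ℂ) (X Y : ℂ) :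
    br (fun j => s j • pw (n+2) (P j) + (-(f j * s' j)) • pw (n+2) (P' j))
        (pw (n+2) X) (pw (n+2) Y)
      = (Y - X) * ∑ S : Finset (Fin n),
          ((∏ j ∈ S, (-(f j * s' j) * ((P' j - X) * (P' j - Y)))) *
            (∏ j ∈ Sᶜ, s j * ((P j - X) * (P j - Y)))) * VV (S.piecewise P' P) := by
  set M : Fin n → Fin (n+2) → ℂ :=
    fun j => s j • pw (n+2) (P j) + (-(f j * s' j)) • pw (n+2) (P' j) with hM
  set U : Fin (n+2) → Fin (n+2) → ℂ :=
    Fin.cons (pw (n+2) X) (Fin.cons (pw (n+2) Y) (fun j => s j • pw (n+2) (P j))) with hU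
  set W : Fin (n+2) → Fin (n+2) → ℂ :=
    Fin.cons 0 (Fin.cons 0 (fun j => pw (n+2) (P' j))) with hW
  set T : Fin (n+2) → ℂ := Fin.cons 0 (Fin.cons 0 (fun j => -(f j * s' j))) with hT
  have hrows : (Fin.cons (pw (n+2) X) (Fin.cons (pw (n+2) Y) M)
        : Fin (n+2) → Fin (n+2) → ℂ)
      = fun k => U k + T k • W k := by
    funext k
    refine Fin.cases ?_ (fun k1 => ?_) k
    · simp [hU, hT, hW]
    · refine Fin.cases ?_ (fun k2 => ?_) k1
      · simp [hU, hT, hW]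
      · simp [hU, hT, hW, hM, Fin.cons_succ]
  have hbr : br M (pw (n+2) X) (pw (n+2) Y)
      = Matrix.detRowAlternating (fun k => U k + T k • W k) := by
    rw [br, hrows]
  rw [hbr, det_expand (n+2) U W T]
  set e : Fin n ↪ Fin (n+2) :=
    ⟨fun j => j.succ.succ, fun a b h => by simpa using h⟩ with he
  have hT0 : ∀ k : Fin (n+2), k ∉ Finset.univ.map e → T k = 0 := by
    intro k
    induction k using Fin.cases with
    | zero => intro _; simp [hT]
    | succ k1 =>
      induction k1 using Fin.cases with
      | zero => intro _; simp [hT]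
      | succ k2 =>
        intro hk
        exact absurd (Finset.mem_map.mpr ⟨k2, Finset.mem_univ _, rfl⟩) hk
  have hsub : ∑ S : Finset (Fin (n+2)), (∏ k ∈ S, T k) *
        Matrix.detRowAlternating (S.piecewise W U)
      = ∑ S ∈ (Finset.univ.map e).powerset, (∏ k ∈ S, T k) *
        Matrix.detRowAlternating (S.piecewise W U) := by
    refine (Finset.sum_subset (Finset.subset_univ _) ?_).symm
    intro S _ hS
    rw [Finset.mem_powerset] at hS
    obtain ⟨k, hk1, hk2⟩ := Finset.not_subset.mp hS
    rw [Finset.prod_eq_zero hk1 (hT0 k hk2), zero_mul]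
  rw [hsub]
  have hreindex : ∑ S ∈ (Finset.univ.map e).powerset, (∏ k ∈ S, T k) *
        Matrix.detRowAlternating (S.piecewise W U)
      = ∑ S' : Finset (Fin n), (∏ k ∈ S'.map e, T k) *
        Matrix.detRowAlternating ((S'.map e).piecewise W U) := by
    refine (Finset.sum_bij (fun (S' : Finset (Fin n)) _ => S'.map e) ?_ ?_ ?_ ?_).symm
    · intro S' _
      exact Finset.mem_powerset.mpr (by
        intro x hx
        obtain ⟨j, _, rfl⟩ := Finset.mem_map.mp hx
        exact Finset.mem_map.mpr ⟨j, Finset.mem_univ _, rfl⟩)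
    · intro a _ b _ h
      exact Finset.map_injective e h
    · intro S hS
      obtain ⟨S', _, rfl⟩ := Finset.subset_map_iff.mp (Finset.mem_powerset.mp hS)
      exact ⟨S', Finset.mem_univ _, rfl⟩
    · intro S' _; rfl
  rw [hreindex, Finset.mul_sum]
  refine Finset.sum_congr rfl fun S' _ => ?_
  have hTprod : ∏ k ∈ S'.map e, T k = ∏ j ∈ S', (-(f j * s' j)) := by
    rw [Finset.prod_map]
    refine Finset.prod_congr rfl fun j _ => ?_
    show T (e j) = _
    simp [hT, he, Fin.cons_succ]
    rfl
  set Q : Fin n → ℂ := S'.piecewise P' P with hQ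
  set RR : Fin (n+2) → ℂ := Fin.cons X (Fin.cons Y Q) with hRR
  set cc : Fin (n+2) → ℂ :=
    Fin.cons 1 (Fin.cons 1 (S'.piecewise (fun _ => (1:ℂ)) s)) with hcc
  have hmemmap : ∀ j : Fin n, (j.succ.succ : Fin (n+2)) ∈ S'.map e ↔ j ∈ S' := by
    intro j
    constructor
    · intro h
      obtain ⟨a, ha, hae⟩ := Finset.mem_map.mp h
      rwa [← e.injective hae]
    · intro h; exact Finset.mem_map.mpr ⟨j, h, rfl⟩
  have hpiece : (S'.map e).piecewise W U = fun k => cc k • pw (n+2) (RR k) := by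
    funext k
    induction k using Fin.cases with
    | zero =>
      have h0 : (0 : Fin (n+2)) ∉ S'.map e := by
        intro h
        obtain ⟨a, _, hae⟩ := Finset.mem_map.mp h
        exact Fin.succ_ne_zero a.succ hae
      rw [Finset.piecewise_eq_of_notMem _ _ _ h0]
      simp [hU, hcc, hRR]
    | succ k1 =>
      induction k1 using Fin.cases with
      | zero =>
        have h1 : ((0 : Fin (n+1)).succ : Fin (n+2)) ∉ S'.map e := by
          intro h
          obtain ⟨a, _, hae⟩ := Finset.mem_map.mp h
          exact Fin.succ_ne_zero a (Fin.succ_injective _ hae)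
        rw [Finset.piecewise_eq_of_notMem _ _ _ h1]
        simp [hU, hcc, hRR, Fin.cons_succ]
      | succ k2 =>
        by_cases h : k2 ∈ S'
        · rw [Finset.piecewise_eq_of_mem _ _ _ ((hmemmap k2).mpr h)]
          simp only [hW, hcc, hRR, hQ, Fin.cons_succ]
          rw [S'.piecewise_eq_of_mem _ _ h, S'.piecewise_eq_of_mem _ _ h]
          simp
        · rw [Finset.piecewise_eq_of_notMem _ _ _ (fun hc => h ((hmemmap k2).mp hc))]
          simp only [hU, hcc, hRR, hQ, Fin.cons_succ]
          rw [S'.piecewise_eq_of_notMem _ _ h, S'.piecewise_eq_of_notMem _ _ h]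
  rw [hTprod, hpiece]
  have hscal : Matrix.detRowAlternating (fun k => cc k • pw (n+2) (RR k))
      = (∏ k, cc k) • Matrix.detRowAlternating (fun k => pw (n+2) (RR k)) :=
    Matrix.detRowAlternating.toMultilinearMap.map_smul_univ cc (fun k => pw (n+2) (RR k))
  rw [hscal]
  have hccprod : ∏ k, cc k = ∏ j ∈ S'ᶜ, s j := by
    rw [Fin.prod_univ_succ, Fin.prod_univ_succ]
    simp only [hcc, Fin.cons_zero, Fin.cons_succ, one_mul]
    rw [Finset.prod_piecewise]
    simp [Finset.compl_eq_univ_sdiff]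
  have hvdm : Matrix.detRowAlternating (fun k => pw (n+2) (RR k)) = VV RR := by
    have h5 : Matrix.detRowAlternating (fun k => pw (n+2) (RR k))
        = Matrix.det (Matrix.vandermonde RR) := rfl
    rw [h5, Matrix.det_vandermonde]; rfl
  rw [hccprod, hvdm]
  have hVRR : VV RR = (Y - X) * ((∏ j, (Q j - X)) * ((∏ j, (Q j - Y)) * VV Q)) := by
    rw [hRR, vprod_cons, vprod_cons]
    rw [Fin.prod_univ_succ]
    simp only [Fin.cons_zero, Fin.cons_succ]
    ring
  rw [hVRR]
  have hQX : ∏ j, (Q j - X) = (∏ j ∈ S', (P' j - X)) * ∏ j ∈ S'ᶜ, (P j - X) := by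
    rw [← Finset.prod_mul_prod_compl S' (fun j => Q j - X)]
    congr 1
    · exact Finset.prod_congr rfl fun j hj => by rw [hQ, S'.piecewise_eq_of_mem _ _ hj]
    · exact Finset.prod_congr rfl fun j hj => by
        rw [hQ, S'.piecewise_eq_of_notMem _ _ (Finset.mem_compl.mp hj)]
  have hQY : ∏ j, (Q j - Y) = (∏ j ∈ S', (P' j - Y)) * ∏ j ∈ S'ᶜ, (P j - Y) := by
    rw [← Finset.prod_mul_prod_compl S' (fun j => Q j - Y)]
    congr 1
    · exact Finset.prod_congr rfl fun j hj => by rw [hQ, S'.piecewise_eq_of_mem _ _ hj]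
    · exact Finset.prod_congr rfl fun j hj => by
        rw [hQ, S'.piecewise_eq_of_notMem _ _ (Finset.mem_compl.mp hj)]
  rw [hQX, hQY, smul_eq_mul]
  rw [show ∏ j ∈ S', (-(f j * s' j) * ((P' j - X) * (P' j - Y)))
      = (∏ j ∈ S', (-(f j * s' j))) * ((∏ j ∈ S', (P' j - X)) * (∏ j ∈ S', (P' j - Y)))
    by rw [← Finset.prod_mul_distrib, ← Finset.prod_mul_distrib]]
  rw [show ∏ j ∈ S'ᶜ, s j * ((P j - X) * (P j - Y))
      = (∏ j ∈ S'ᶜ, s j) * ((∏ j ∈ S'ᶜ, (P j - X)) * (∏ j ∈ S'ᶜ, (P j - Y)))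
    by rw [← Finset.prod_mul_distrib, ← Finset.prod_mul_distrib]]
  ring


lemma bracket_eq (P P' f s s' φ : Fin n → ℂ) (X Y : ℂ) (hVP : VV P ≠ 0)
    (hfac : ∀ j, -(f j * s' j) * ((P' j - X) * (P' j - Y))
      = s j * ((P j - X) * (P j - Y)) * (-φ j)) :
    br (fun j => s j • pw (n+2) (P j) + (-(f j * s' j)) • pw (n+2) (P' j))
        (pw (n+2) X) (pw (n+2) Y)
      = (Y - X) * (∏ j, s j * ((P j - X) * (P j - Y))) * VV P * Hfun n P P' φ := by
  rw [br_expand, Hfun_eq]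
  rw [show (Y - X) * (∏ j, s j * ((P j - X) * (P j - Y))) * VV P *
        ((∑ S : Finset (Fin n), (∏ j ∈ S, (-φ j)) * VV (S.piecewise P' P)) / VV P)
      = (Y - X) * ((∏ j, s j * ((P j - X) * (P j - Y))) *
        (∑ S : Finset (Fin n), (∏ j ∈ S, (-φ j)) * VV (S.piecewise P' P))) from by
    field_simp]
  congr 1
  rw [Finset.mul_sum]
  refine Finset.sum_congr rfl fun S _ => ?_
  rw [← Finset.prod_mul_prod_compl S (fun j => s j * ((P j - X) * (P j - Y)))]
  rw [show ∏ j ∈ S, (-(f j * s' j) * ((P' j - X) * (P' j - Y)))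
      = (∏ j ∈ S, s j * ((P j - X) * (P j - Y))) * ∏ j ∈ S, (-φ j) from by
    rw [← Finset.prod_mul_distrib]
    exact Finset.prod_congr rfl fun j _ => hfac j]
  ring

end FayAux

open FayAux

/-- The rational Fay identity for the rational Θ-functions `H`. -/
theorem rational_fay (g : ℕ) (hg : 1 ≤ g) (P P' : Fin g → ℂ)
    (hP : Function.Injective P)
    (A B C D : ℂ)
    (hAB : A ≠ B) (hAC : A ≠ C) (hAD : A ≠ D)
    (hBC : B ≠ C) (hBD : B ≠ D) (hCD : C ≠ D)
    (hPA : ∀ j, P j ≠ A ∧ P j ≠ B ∧ P j ≠ C ∧ P j ≠ D)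
    (hP'A : ∀ j, P' j ≠ A ∧ P' j ≠ B ∧ P' j ≠ C ∧ P' j ≠ D)
    (f : Fin g → ℂ) :
    Hfun g P P' f *
        Hfun g P P' (fun j => f j * sigmaFn (P j) (P' j) A B * sigmaFn (P j) (P' j) C D) =
      crossRatio A B D C *
          Hfun g P P' (fun j => f j * sigmaFn (P j) (P' j) A B) *
          Hfun g P P' (fun j => f j * sigmaFn (P j) (P' j) C D) +
        crossRatio A D B C *
          Hfun g P P' (fun j => f j * sigmaFn (P j) (P' j) A D) *
          Hfun g P P' (fun j => f j * sigmaFn (P j) (P' j) C B) := by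
  have hPAd : ∀ j, P j - A ≠ 0 := fun j => sub_ne_zero_of_ne (hPA j).1
  have hPBd : ∀ j, P j - B ≠ 0 := fun j => sub_ne_zero_of_ne (hPA j).2.1
  have hPCd : ∀ j, P j - C ≠ 0 := fun j => sub_ne_zero_of_ne (hPA j).2.2.1
  have hPDd : ∀ j, P j - D ≠ 0 := fun j => sub_ne_zero_of_ne (hPA j).2.2.2
  have hP'Ad : ∀ j, P' j - A ≠ 0 := fun j => sub_ne_zero_of_ne (hP'A j).1
  have hP'Bd : ∀ j, P' j - B ≠ 0 := fun j => sub_ne_zero_of_ne (hP'A j).2.1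
  have hP'Cd : ∀ j, P' j - C ≠ 0 := fun j => sub_ne_zero_of_ne (hP'A j).2.2.1
  have hP'Dd : ∀ j, P' j - D ≠ 0 := fun j => sub_ne_zero_of_ne (hP'A j).2.2.2
  have hVP : VV P ≠ 0 := by
    unfold VV
    refine Finset.prod_ne_zero_iff.mpr fun i _ => Finset.prod_ne_zero_iff.mpr fun j hj => ?_
    refine sub_ne_zero_of_ne fun hc => ?_
    have h1 := hP hc
    have h2 := Finset.mem_Ioi.mp hj
    rw [h1] at h2
    exact lt_irrefl i h2
  set sv : Fin g → ℂ := fun j => ((P j - B) * (P j - D))⁻¹ with hsv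
  set sv' : Fin g → ℂ := fun j => ((P' j - B) * (P' j - D))⁻¹ with hsv'
  have hsvne : ∀ j, sv j ≠ 0 := fun j => inv_ne_zero (mul_ne_zero (hPBd j) (hPDd j))
  -- the six factor identities
  have hfacAB : ∀ j, -(f j * sv' j) * ((P' j - A) * (P' j - B))
      = sv j * ((P j - A) * (P j - B)) * (-(f j * sigmaFn (P j) (P' j) A D)) := by
    intro j
    rw [sigmaFn, hsv, hsv']
    field_simp [hPAd j, hPBd j, hPCd j, hPDd j, hP'Ad j, hP'Bd j, hP'Cd j, hP'Dd j]
  have hfacCD : ∀ j, -(f j * sv' j) * ((P' j - C) * (P' j - D))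
      = sv j * ((P j - C) * (P j - D)) * (-(f j * sigmaFn (P j) (P' j) C B)) := by
    intro j
    rw [sigmaFn, hsv, hsv']
    field_simp [hPAd j, hPBd j, hPCd j, hPDd j, hP'Ad j, hP'Bd j, hP'Cd j, hP'Dd j]
  have hfacAC : ∀ j, -(f j * sv' j) * ((P' j - A) * (P' j - C))
      = sv j * ((P j - A) * (P j - C)) *
        (-(f j * sigmaFn (P j) (P' j) A B * sigmaFn (P j) (P' j) C D)) := by
    intro j
    rw [sigmaFn, sigmaFn, hsv, hsv']
    field_simp [hPAd j, hPBd j, hPCd j, hPDd j, hP'Ad j, hP'Bd j, hP'Cd j, hP'Dd j]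
  have hfacBD : ∀ j, -(f j * sv' j) * ((P' j - B) * (P' j - D))
      = sv j * ((P j - B) * (P j - D)) * (-(f j)) := by
    intro j
    rw [hsv, hsv']
    field_simp [hPBd j, hPDd j, hP'Bd j, hP'Dd j]
  have hfacAD : ∀ j, -(f j * sv' j) * ((P' j - A) * (P' j - D))
      = sv j * ((P j - A) * (P j - D)) * (-(f j * sigmaFn (P j) (P' j) A B)) := by
    intro j
    rw [sigmaFn, hsv, hsv']
    field_simp [hPAd j, hPBd j, hPCd j, hPDd j, hP'Ad j, hP'Bd j, hP'Cd j, hP'Dd j]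
  have hfacBC : ∀ j, -(f j * sv' j) * ((P' j - B) * (P' j - C))
      = sv j * ((P j - B) * (P j - C)) * (-(f j * sigmaFn (P j) (P' j) C D)) := by
    intro j
    rw [sigmaFn, hsv, hsv']
    field_simp [hPAd j, hPBd j, hPCd j, hPDd j, hP'Ad j, hP'Bd j, hP'Cd j, hP'Dd j]
  -- the six bracket identities
  have hb1 := bracket_eq P P' f sv sv'
    (fun j => f j * sigmaFn (P j) (P' j) A D) A B hVP hfacAB
  have hb2 := bracket_eq P P' f sv sv'
    (fun j => f j * sigmaFn (P j) (P' j) C B) C D hVP hfacCD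
  have hb3 := bracket_eq P P' f sv sv'
    (fun j => f j * sigmaFn (P j) (P' j) A B * sigmaFn (P j) (P' j) C D) A C hVP hfacAC
  have hb4 := bracket_eq P P' f sv sv' f B D hVP hfacBD
  have hb5 := bracket_eq P P' f sv sv'
    (fun j => f j * sigmaFn (P j) (P' j) A B) A D hVP hfacAD
  have hb6 := bracket_eq P P' f sv sv'
    (fun j => f j * sigmaFn (P j) (P' j) C D) B C hVP hfacBC
  have hpl := plucker (fun j => sv j • pw (g+2) (P j) + (-(f j * sv' j)) • pw (g+2) (P' j))
    (pw (g+2) A) (pw (g+2) B) (pw (g+2) C) (pw (g+2) D)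
  rw [hb1, hb2, hb3, hb4, hb5, hb6] at hpl
  set T1 := Hfun g P P' (fun j => f j * sigmaFn (P j) (P' j) A D) with hT1
  set T2 := Hfun g P P' (fun j => f j * sigmaFn (P j) (P' j) C B) with hT2
  set T3 := Hfun g P P' (fun j => f j * sigmaFn (P j) (P' j) A B * sigmaFn (P j) (P' j) C D)
    with hT3
  set T4 := Hfun g P P' f with hT4
  set T5 := Hfun g P P' (fun j => f j * sigmaFn (P j) (P' j) A B) with hT5
  set T6 := Hfun g P P' (fun j => f j * sigmaFn (P j) (P' j) C D) with hT6
  set E1 := ∏ j, sv j * ((P j - A) * (P j - B)) with hE1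
  set E2 := ∏ j, sv j * ((P j - C) * (P j - D)) with hE2
  have hmAC : (∏ j, sv j * ((P j - A) * (P j - C))) * (∏ j, sv j * ((P j - B) * (P j - D)))
      = E1 * E2 := by
    rw [hE1, hE2, ← Finset.prod_mul_distrib, ← Finset.prod_mul_distrib]
    exact Finset.prod_congr rfl fun j _ => by ring
  have hmAD : (∏ j, sv j * ((P j - A) * (P j - D))) * (∏ j, sv j * ((P j - B) * (P j - C)))
      = E1 * E2 := by
    rw [hE1, hE2, ← Finset.prod_mul_distrib, ← Finset.prod_mul_distrib]
    exact Finset.prod_congr rfl fun j _ => by ring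
  have key : (E1 * E2) * (VV P * VV P) *
      ((B - A) * (D - C) * (T1 * T2) - (C - A) * (D - B) * (T3 * T4)
        + (D - A) * (C - B) * (T5 * T6)) = 0 := by
    linear_combination hpl + ((C - A) * (D - B) * (VV P * VV P) * T3 * T4) * hmAC
      - ((D - A) * (C - B) * (VV P * VV P) * T5 * T6) * hmAD
  have hE1ne : E1 ≠ 0 := Finset.prod_ne_zero_iff.mpr fun j _ =>
    mul_ne_zero (hsvne j) (mul_ne_zero (hPAd j) (hPBd j))
  have hE2ne : E2 ≠ 0 := Finset.prod_ne_zero_iff.mpr fun j _ =>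
    mul_ne_zero (hsvne j) (mul_ne_zero (hPCd j) (hPDd j))
  have hGz : (B - A) * (D - C) * (T1 * T2) - (C - A) * (D - B) * (T3 * T4)
      + (D - A) * (C - B) * (T5 * T6) = 0 := by
    by_contra hne
    exact (mul_ne_zero (mul_ne_zero (mul_ne_zero hE1ne hE2ne)
      (mul_ne_zero hVP hVP)) hne) key
  have hACd : A - C ≠ 0 := sub_ne_zero_of_ne hAC
  have hBDd : B - D ≠ 0 := sub_ne_zero_of_ne hBD
  have hDBd : D - B ≠ 0 := sub_ne_zero_of_ne (Ne.symm hBD)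
  rw [crossRatio, crossRatio]
  field_simp
  linear_combination (B - D) * hGz
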